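/- Finite-variance characterization for ΔEx: let q be an SMM in difference representation with Z₋ > 0, let p, f, w be as in the importance-sampling setup, assume f·w is integrable with respect to q₊·μ and q₋·μ, assume q(x) > 0 for μ-a.e. x in the set {q₊ > 0} ∪ {q₋ > 0}, and let Î_ΔEx be the ΔEx estimator with sample sizes S₊, S₋ ≥ 1. Then Var[Î_ΔEx] < ∞ if and only if both ∫ (f(x) w(x))² q₊(x) dμ(x) < ∞ and ∫ (f(x) w(x))² q₋(x) dμ(x) < ∞. -/

import Mathlib

open MeasureTheory ProbabilityTheory Filter

set_option maxHeartbeats 1000000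

/-- Evaluation is measure preserving on product of probability measures. -/
lemma aux_measurePreserving_eval {ι : Type*} [Fintype ι] [DecidableEq ι] {α : ι → Type*}
    [∀ i, MeasurableSpace (α i)] (ν : ∀ i, Measure (α i)) [∀ i, IsProbabilityMeasure (ν i)]
    (i : ι) : MeasurePreserving (Function.eval i) (Measure.pi ν) (ν i) := by
  refine ⟨measurable_pi_apply i, ?_⟩
  ext s hs
  rw [Measure.map_apply (measurable_pi_apply i) hs]
  have h1 : Function.eval i ⁻¹' s
      = Set.pi Set.univ (Function.update (fun j => (Set.univ : Set (α j))) i s) := by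
    ext x
    simp only [Set.mem_preimage, Set.mem_pi, Set.mem_univ, forall_true_left]
    constructor
    · intro hx j
      rcases eq_or_ne j i with rfl | hj
      · simpa using hx
      · simp [Function.update_of_ne hj]
    · intro hx
      simpa using hx i
  rw [h1, Measure.pi_pi]
  rw [Fintype.prod_eq_single i fun j hj => by simp [Function.update_of_ne hj]]
  simp

/-- Slice lemma: if `h ω.1 + k ω.2` is in L² of a product of probability measures,
then `h` is in L². -/
lemma aux_slice {α β : Type*} [MeasurableSpace α] [MeasurableSpace β]
    {μ : Measure α} {ρ : Measure β} [IsProbabilityMeasure μ] [IsProbabilityMeasure ρ]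
    {h : α → ℝ} {k : β → ℝ} (hh : Measurable h) (hk : Measurable k)
    (H : MemLp (fun ω : α × β => h ω.1 + k ω.2) 2 (μ.prod ρ)) : MemLp h 2 μ := by
  have hmeas : Measurable (fun ω : α × β => h ω.1 + k ω.2) :=
    (hh.comp measurable_fst).add (hk.comp measurable_snd)
  have hint : Integrable (fun ω : α × β => (h ω.1 + k ω.2) ^ 2) (μ.prod ρ) :=
    (memLp_two_iff_integrable_sq hmeas.aestronglyMeasurable).mp H
  obtain ⟨y, hy⟩ := hint.prod_left_ae.exists
  have h2 : MemLp (fun x => h x + k y) 2 μ :=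
    (memLp_two_iff_integrable_sq ((hh.add measurable_const)).aestronglyMeasurable).mpr hy
  have h3 := h2.sub (memLp_const (k y))
  simpa [Pi.sub_def] using h3

/-- Extract one coordinate from an L² sum over an i.i.d. product. -/
lemma aux_pi_sum {X : Type*} [MeasurableSpace X] {ν : Measure X} [IsProbabilityMeasure ν]
    {g : X → ℝ} (hg : Measurable g) {n : ℕ}
    (H : MemLp (fun x : Fin (n + 1) → X => ∑ s, g (x s)) 2 (Measure.pi fun _ => ν)) :
    MemLp g 2 ν := by
  have hmp := measurePreserving_piFinSuccAbove (fun _ : Fin (n + 1) => ν) 0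
  set e := MeasurableEquiv.piFinSuccAbove (fun _ : Fin (n + 1) => X) 0 with he
  have hsymm : MeasurePreserving e.symm
      (ν.prod (Measure.pi fun _ : Fin n => ν)) (Measure.pi fun _ : Fin (n + 1) => ν) :=
    hmp.symm e
  have H2 : MemLp ((fun x : Fin (n + 1) → X => ∑ s, g (x s)) ∘ e.symm) 2
      (ν.prod (Measure.pi fun _ : Fin n => ν)) := H.comp_measurePreserving hsymm
  have heq : ((fun x : Fin (n + 1) → X => ∑ s, g (x s)) ∘ e.symm)
      = fun ω : X × (Fin n → X) => g ω.1 + ∑ j, g (ω.2 j) := by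
    funext ω
    have hsy : e.symm ω = Fin.cons ω.1 ω.2 := by
      simp [he, MeasurableEquiv.piFinSuccAbove, Fin.insertNthEquiv, Fin.insertNth_zero']
    simp [Function.comp, hsy, Fin.sum_univ_succ]
  rw [heq] at H2
  exact aux_slice hg (Finset.univ.measurable_sum fun j _ => hg.comp (measurable_pi_apply j)) H2


/-- **Finite-variance characterization for the ΔEx estimator.**
For an SMM proposal in difference representation with `Z₋ > 0`, importance weight
`w = p/q`, `f·w` integrable under `q₊·μ` and `q₋·μ`, and `q > 0` μ-a.e. on
`{q₊ > 0} ∪ {q₋ > 0}`, the ΔEx estimator has finite variance iff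
`∫ (fw)² q₊ dμ < ∞` and `∫ (fw)² q₋ dμ < ∞`. -/
theorem deltaEx_finite_variance_iff
    {X : Type*} [MeasurableSpace X] (μ : Measure X)
    (qp qm q : X → ℝ) (Zp Zm : ℝ)
    (hqp_meas : Measurable qp) (hqm_meas : Measurable qm)
    (hqp_nonneg : ∀ x, 0 ≤ qp x) (hqm_nonneg : ∀ x, 0 ≤ qm x)
    (hqp_int : ∫ x, qp x ∂μ = 1) (hqm_int : ∫ x, qm x ∂μ = 1)
    (hZp : 0 < Zp) (hZm : 0 < Zm) (hZq : 0 < Zp - Zm)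
    (hq_def : ∀ x, q x = (Zp - Zm)⁻¹ * (Zp * qp x - Zm * qm x))
    (hq_nonneg : ∀ᵐ x ∂μ, 0 ≤ q x)
    (p f w : X → ℝ)
    (hp_meas : Measurable p) (hp_nonneg : ∀ x, 0 ≤ p x) (hp_int : ∫ x, p x ∂μ = 1)
    (hf_meas : Measurable f)
    (hf_int : Integrable (fun x => |f x| * p x) μ)
    (habs : ∀ᵐ x ∂μ, q x = 0 → p x = 0)
    (hw_def : ∀ x, w x = if 0 < q x then p x / q x else 0)
    (hfw_qp : Integrable (fun x => f x * w x)
      (μ.withDensity fun x => ENNReal.ofReal (qp x)))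
    (hfw_qm : Integrable (fun x => f x * w x)
      (μ.withDensity fun x => ENNReal.ofReal (qm x)))
    (hq_pos : ∀ᵐ x ∂μ, (0 < qp x ∨ 0 < qm x) → 0 < q x)
    (Sp Sm : ℕ) (hSp : 1 ≤ Sp) (hSm : 1 ≤ Sm) :
    evariance
      (fun ω : (Fin Sp → X) × (Fin Sm → X) =>
        (Zp / (Zp - Zm)) * (Sp : ℝ)⁻¹ * ∑ s : Fin Sp, f (ω.1 s) * w (ω.1 s)
          - (Zm / (Zp - Zm)) * (Sm : ℝ)⁻¹ * ∑ s : Fin Sm, f (ω.2 s) * w (ω.2 s))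
      ((Measure.pi fun _ : Fin Sp => μ.withDensity fun x => ENNReal.ofReal (qp x)).prod
        (Measure.pi fun _ : Fin Sm => μ.withDensity fun x => ENNReal.ofReal (qm x)))
      < ⊤
    ↔ (Integrable (fun x => (f x * w x) ^ 2 * qp x) μ
        ∧ Integrable (fun x => (f x * w x) ^ 2 * qm x) μ) := by
  obtain ⟨np, rfl⟩ : ∃ n, Sp = n + 1 := ⟨Sp - 1, by omega⟩
  obtain ⟨nm, rfl⟩ : ∃ n, Sm = n + 1 := ⟨Sm - 1, by omega⟩
  -- measurability
  have hq_meas : Measurable q := by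
    have hq : q = fun x => (Zp - Zm)⁻¹ * (Zp * qp x - Zm * qm x) := funext hq_def
    rw [hq]
    exact measurable_const.mul
      ((measurable_const.mul hqp_meas).sub (measurable_const.mul hqm_meas))
  have hw_meas : Measurable w := by
    have hw : w = fun x => if 0 < q x then p x / q x else 0 := funext hw_def
    rw [hw]
    exact Measurable.ite (measurableSet_lt measurable_const hq_meas)
      (hp_meas.div hq_meas) measurable_const
  have hg_meas : Measurable fun x => f x * w x := hf_meas.mul hw_meas
  -- probability measures
  have hprob : ∀ r : X → ℝ, Measurable r → (∀ x, 0 ≤ r x) → (∫ x, r x ∂μ = 1) →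
      IsProbabilityMeasure (μ.withDensity fun x => ENNReal.ofReal (r x)) := by
    intro r hrm hrn hri
    have hint : Integrable r μ := by
      by_contra hcon
      rw [integral_undef hcon] at hri
      norm_num at hri
    constructor
    rw [withDensity_apply _ MeasurableSet.univ, setLIntegral_univ,
      ← ofReal_integral_eq_lintegral_ofReal hint (Filter.Eventually.of_forall hrn), hri]
    norm_num
  haveI hPp : IsProbabilityMeasure (μ.withDensity fun x => ENNReal.ofReal (qp x)) :=
    hprob qp hqp_meas hqp_nonneg hqp_int
  haveI hPm : IsProbabilityMeasure (μ.withDensity fun x => ENNReal.ofReal (qm x)) :=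
    hprob qm hqm_meas hqm_nonneg hqm_int
  set νp : Measure X := μ.withDensity fun x => ENNReal.ofReal (qp x) with hνp
  set νm : Measure X := μ.withDensity fun x => ENNReal.ofReal (qm x) with hνm
  -- constants
  have hSpR : ((np : ℝ) + 1) ≠ 0 := by positivity
  have hA : Zp / (Zp - Zm) * ((np : ℝ) + 1)⁻¹ ≠ 0 := by
    apply mul_ne_zero (div_ne_zero (ne_of_gt hZp) (ne_of_gt hZq)) (by positivity)
  have hB : Zm / (Zp - Zm) * ((nm : ℝ) + 1)⁻¹ ≠ 0 := by
    apply mul_ne_zero (div_ne_zero (ne_of_gt hZm) (ne_of_gt hZq)) (by positivity)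
  have hT_meas : Measurable fun ω : (Fin (np + 1) → X) × (Fin (nm + 1) → X) =>
      (Zp / (Zp - Zm)) * ((np + 1 : ℕ) : ℝ)⁻¹ * ∑ s : Fin (np + 1), f (ω.1 s) * w (ω.1 s)
        - (Zm / (Zp - Zm)) * ((nm + 1 : ℕ) : ℝ)⁻¹ * ∑ s : Fin (nm + 1), f (ω.2 s) * w (ω.2 s) := by
    apply Measurable.sub
    · exact measurable_const.mul (Finset.univ.measurable_sum fun s _ =>
        hg_meas.comp ((measurable_pi_apply s).comp measurable_fst))
    · exact measurable_const.mul (Finset.univ.measurable_sum fun s _ =>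
        hg_meas.comp ((measurable_pi_apply s).comp measurable_snd))
  rw [evariance_lt_top_iff_memLp hT_meas.aestronglyMeasurable]
  -- second moment translation
  have hiff : ∀ r : X → ℝ, Measurable r → (∀ x, 0 ≤ r x) →
      (MemLp (fun x => f x * w x) 2 (μ.withDensity fun x => ENNReal.ofReal (r x)) ↔
        Integrable (fun x => (f x * w x) ^ 2 * r x) μ) := by
    intro r hrm hrn
    rw [memLp_two_iff_integrable_sq hg_meas.aestronglyMeasurable,
      integrable_withDensity_iff hrm.ennreal_ofReal
        (Filter.Eventually.of_forall fun x => ENNReal.ofReal_lt_top)]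
    simp_rw [ENNReal.toReal_ofReal (hrn _)]
  rw [← hiff qp hqp_meas hqp_nonneg, ← hiff qm hqm_meas hqm_nonneg]
  constructor
  · intro H
    -- rewrite as sum of two independent pieces
    have hTeq : (fun ω : (Fin (np + 1) → X) × (Fin (nm + 1) → X) =>
        (Zp / (Zp - Zm)) * ((np + 1 : ℕ) : ℝ)⁻¹ * ∑ s : Fin (np + 1), f (ω.1 s) * w (ω.1 s)
          - (Zm / (Zp - Zm)) * ((nm + 1 : ℕ) : ℝ)⁻¹ * ∑ s : Fin (nm + 1), f (ω.2 s) * w (ω.2 s))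
        = fun ω =>
          (fun x : Fin (np + 1) → X =>
            Zp / (Zp - Zm) * ((np : ℝ) + 1)⁻¹ * ∑ s, f (x s) * w (x s)) ω.1
          + (fun y : Fin (nm + 1) → X =>
            -(Zm / (Zp - Zm) * ((nm : ℝ) + 1)⁻¹ * ∑ s, f (y s) * w (y s))) ω.2 := by
      funext ω
      push_cast
      ring
    rw [hTeq] at H
    have hUm : Measurable fun x : Fin (np + 1) → X =>
        Zp / (Zp - Zm) * ((np : ℝ) + 1)⁻¹ * ∑ s, f (x s) * w (x s) :=
      measurable_const.mul (Finset.univ.measurable_sum fun s _ =>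
        hg_meas.comp (measurable_pi_apply s))
    have hVm : Measurable fun y : Fin (nm + 1) → X =>
        -(Zm / (Zp - Zm) * ((nm : ℝ) + 1)⁻¹ * ∑ s, f (y s) * w (y s)) :=
      (measurable_const.mul (Finset.univ.measurable_sum fun s _ =>
        hg_meas.comp (measurable_pi_apply s))).neg
    constructor
    · have h1 := aux_slice hUm hVm H
      have h2 := h1.const_mul (Zp / (Zp - Zm) * ((np : ℝ) + 1)⁻¹)⁻¹
      have heqA : (fun x : Fin (np + 1) → X =>
          (Zp / (Zp - Zm) * ((np : ℝ) + 1)⁻¹)⁻¹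
            * (Zp / (Zp - Zm) * ((np : ℝ) + 1)⁻¹ * ∑ s, f (x s) * w (x s)))
          = fun x => ∑ s, f (x s) * w (x s) := by
        funext x
        rw [inv_mul_cancel_left₀ hA]
      have h3 : MemLp (fun x : Fin (np + 1) → X => ∑ s, f (x s) * w (x s)) 2
          (Measure.pi fun _ => νp) := by
        rwa [heqA] at h2
      exact aux_pi_sum hg_meas h3
    · have Hsw := H.comp_measurePreserving
        (Measure.measurePreserving_swap (μ := Measure.pi fun _ : Fin (nm + 1) => νm)
          (ν := Measure.pi fun _ : Fin (np + 1) => νp))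
      have Hsw' : MemLp (fun ω : (Fin (nm + 1) → X) × (Fin (np + 1) → X) =>
          (fun y : Fin (nm + 1) → X =>
            -(Zm / (Zp - Zm) * ((nm : ℝ) + 1)⁻¹ * ∑ s, f (y s) * w (y s))) ω.1
          + (fun x : Fin (np + 1) → X =>
            Zp / (Zp - Zm) * ((np : ℝ) + 1)⁻¹ * ∑ s, f (x s) * w (x s)) ω.2) 2
          ((Measure.pi fun _ : Fin (nm + 1) => νm).prod
            (Measure.pi fun _ : Fin (np + 1) => νp)) := by
        have : ((fun ω : (Fin (np + 1) → X) × (Fin (nm + 1) → X) =>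
            (fun x : Fin (np + 1) → X =>
              Zp / (Zp - Zm) * ((np : ℝ) + 1)⁻¹ * ∑ s, f (x s) * w (x s)) ω.1
            + (fun y : Fin (nm + 1) → X =>
              -(Zm / (Zp - Zm) * ((nm : ℝ) + 1)⁻¹ * ∑ s, f (y s) * w (y s))) ω.2)
            ∘ Prod.swap)
            = fun ω : (Fin (nm + 1) → X) × (Fin (np + 1) → X) =>
            (fun y : Fin (nm + 1) → X =>
              -(Zm / (Zp - Zm) * ((nm : ℝ) + 1)⁻¹ * ∑ s, f (y s) * w (y s))) ω.1
            + (fun x : Fin (np + 1) → X =>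
              Zp / (Zp - Zm) * ((np : ℝ) + 1)⁻¹ * ∑ s, f (x s) * w (x s)) ω.2 := by
          funext ω
          simp [add_comm]
        rw [← this]
        exact Hsw
      have h1 := aux_slice hVm hUm Hsw'
      have h1' := h1.neg
      have h2 := h1'.const_mul (Zm / (Zp - Zm) * ((nm : ℝ) + 1)⁻¹)⁻¹
      have heqB : (fun y : Fin (nm + 1) → X =>
          (Zm / (Zp - Zm) * ((nm : ℝ) + 1)⁻¹)⁻¹
            * (Zm / (Zp - Zm) * ((nm : ℝ) + 1)⁻¹ * ∑ s, f (y s) * w (y s)))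
          = fun y => ∑ s, f (y s) * w (y s) := by
        funext y
        rw [inv_mul_cancel_left₀ hB]
      have h3 : MemLp (fun y : Fin (nm + 1) → X => ∑ s, f (y s) * w (y s)) 2
          (Measure.pi fun _ => νm) := by
        simp only [Pi.neg_apply, neg_neg] at h2
        rwa [heqB] at h2
      exact aux_pi_sum hg_meas h3
  · rintro ⟨hgp, hgm⟩
    have mp_fst : MeasurePreserving Prod.fst
        ((Measure.pi fun _ : Fin (np + 1) => νp).prod (Measure.pi fun _ : Fin (nm + 1) => νm))
        (Measure.pi fun _ : Fin (np + 1) => νp) :=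
      ⟨measurable_fst, by rw [Measure.map_fst_prod]; simp⟩
    have mp_snd : MeasurePreserving Prod.snd
        ((Measure.pi fun _ : Fin (np + 1) => νp).prod (Measure.pi fun _ : Fin (nm + 1) => νm))
        (Measure.pi fun _ : Fin (nm + 1) => νm) :=
      ⟨measurable_snd, by rw [Measure.map_snd_prod]; simp⟩
    have h1 : ∀ s : Fin (np + 1),
        MemLp (fun ω : (Fin (np + 1) → X) × (Fin (nm + 1) → X) => f (ω.1 s) * w (ω.1 s)) 2
        ((Measure.pi fun _ : Fin (np + 1) => νp).prod (Measure.pi fun _ : Fin (nm + 1) => νm)) :=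
      fun s => hgp.comp_measurePreserving
        ((aux_measurePreserving_eval (fun _ : Fin (np + 1) => νp) s).comp mp_fst)
    have h2 : ∀ s : Fin (nm + 1),
        MemLp (fun ω : (Fin (np + 1) → X) × (Fin (nm + 1) → X) => f (ω.2 s) * w (ω.2 s)) 2
        ((Measure.pi fun _ : Fin (np + 1) => νp).prod (Measure.pi fun _ : Fin (nm + 1) => νm)) :=
      fun s => hgm.comp_measurePreserving
        ((aux_measurePreserving_eval (fun _ : Fin (nm + 1) => νm) s).comp mp_snd)
    have hs1 := (memLp_finset_sum Finset.univ fun s _ => h1 s).const_mul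
      ((Zp / (Zp - Zm)) * ((np + 1 : ℕ) : ℝ)⁻¹)
    have hs2 := (memLp_finset_sum Finset.univ fun s _ => h2 s).const_mul
      ((Zm / (Zp - Zm)) * ((nm + 1 : ℕ) : ℝ)⁻¹)
    have := hs1.sub hs2
    simpa [mul_assoc, Pi.sub_def] using this
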